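/- Let K ⊆ ℕ and let K[·] be an approximation of K (K[s] ⊆ K[s+1] for all s and K = ⋃_s K[s]). Define the coloring c : ℕ → Fin 2 by c(n) = VSG(n) mod 2. Suppose H is an infinite apart set of positive integers and a, b are positive integers such that FS^{{a, b, a+b, a+2b}}(H) is monochromatic under c. Then for every m ∈ FS^{=a}(H) ∪ FS^{=b}(H) ∪ FS^{=a+b}(H), the number SG(m) of short gaps of m is even. -/

import Mathlib

/-- `lam n` is the least exponent in the binary expansion of `n`
(the 2-adic valuation of `n`). -/
def lam (n : ℕ) : ℕ := padicValNat 2 n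

/-- `mu n` is the greatest exponent in the binary expansion of `n`. -/
def mu (n : ℕ) : ℕ := Nat.log 2 n

/-- A set `X` of positive integers is apart if for all `x < x'` in `X`,
`μ(x) < λ(x')`. -/
def ApartSet (X : Set ℕ) : Prop :=
  (∀ x ∈ X, 0 < x) ∧ ∀ x ∈ X, ∀ y ∈ X, x < y → mu x < lam y

/-- `FSeq j B` is the set of sums of `j` distinct elements of `B`. -/
def FSeq (j : ℕ) (B : Set ℕ) : Set ℕ :=
  {n | ∃ F : Finset ℕ, ↑F ⊆ B ∧ F.card = j ∧ ∑ x ∈ F, x = n}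

/-- `FSin A B = ⋃ j ∈ A, FSeq j B`. -/
def FSin (A B : Set ℕ) : Set ℕ := ⋃ j ∈ A, FSeq j B

/-- A set is monochromatic under a coloring `c` if `c` is constant on it. -/
def MonoChr {r : ℕ} (c : ℕ → Fin r) (S : Set ℕ) : Prop :=
  ∀ x ∈ S, ∀ y ∈ S, c x = c y

/-- The gaps of `n`: pairs of consecutive exponents in the binary expansion. -/
def gaps (n : ℕ) : Set (ℕ × ℕ) :=
  {p | n.testBit p.1 ∧ n.testBit p.2 ∧ p.1 < p.2 ∧
    ∀ t, p.1 < t → t < p.2 → ¬ n.testBit t}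

/-- The gap `p` of `n` is short in `n` (w.r.t. `K` and approximation `Kapp`). -/
def ShortGap (K : Set ℕ) (Kapp : ℕ → Set ℕ) (n : ℕ) (p : ℕ × ℕ) : Prop :=
  p ∈ gaps n ∧ ∃ x ≤ p.1, x ∈ K ∧ x ∉ Kapp p.2

/-- The gap `p` of `n` is very short in `n` (w.r.t. approximation `Kapp`). -/
def VeryShortGap (Kapp : ℕ → Set ℕ) (n : ℕ) (p : ℕ × ℕ) : Prop :=
  p ∈ gaps n ∧ ∃ x ≤ p.1, x ∈ Kapp (mu n) ∧ x ∉ Kapp p.2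

/-- `SG K Kapp n` is the number of short gaps of `n`. -/
noncomputable def SG (K : Set ℕ) (Kapp : ℕ → Set ℕ) (n : ℕ) : ℕ :=
  {p : ℕ × ℕ | ShortGap K Kapp n p}.ncard

/-- `VSG Kapp n` is the number of very short gaps of `n`. -/
noncomputable def VSG (Kapp : ℕ → Set ℕ) (n : ℕ) : ℕ :=
  {p : ℕ × ℕ | VeryShortGap Kapp n p}.ncard

private lemma testBit_le_mu {n t : ℕ} (h : n.testBit t) : t ≤ mu n := by
  by_contra hlt
  push_neg at hlt
  have hlt2 : n < 2 ^ t :=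
    lt_of_lt_of_le (Nat.lt_pow_succ_log_self one_lt_two n)
      (Nat.pow_le_pow_right (by norm_num) hlt)
  simp [Nat.testBit_eq_false_of_lt hlt2] at h

private lemma lam_le_of_testBit {n t : ℕ} (h : n.testBit t) : lam n ≤ t := by
  by_contra hlt
  push_neg at hlt
  have hdvd : 2 ^ (t + 1) ∣ n := dvd_trans (pow_dvd_pow 2 hlt) pow_padicValNat_dvd
  obtain ⟨k, rfl⟩ := hdvd
  rw [Nat.testBit_eq_decide_div_mod_eq] at h
  have hdiv : 2 ^ (t + 1) * k / 2 ^ t = 2 * k := by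
    have he : 2 ^ (t + 1) * k = 2 ^ t * (2 * k) := by ring
    rw [he, Nat.mul_div_cancel_left _ (Nat.pow_pos (n := t) (by norm_num : 0 < 2))]
  rw [hdiv] at h
  simp [Nat.mul_mod_right] at h

private lemma testBit_mu {n : ℕ} (hn : n ≠ 0) : n.testBit (mu n) := by
  have h1 : 2 ^ mu n ≤ n := Nat.pow_log_le_self 2 hn
  have h2 : n < 2 ^ (mu n + 1) := Nat.lt_pow_succ_log_self one_lt_two n
  have hdiv : n / 2 ^ mu n = 1 := by
    apply Nat.div_eq_of_lt_le (by simpa using h1)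
    rw [pow_succ] at h2
    omega
  rw [Nat.testBit_eq_decide_div_mod_eq, hdiv]
  simp

private lemma testBit_lam {n : ℕ} (hn : n ≠ 0) : n.testBit (lam n) := by
  have hodd : ¬ 2 ∣ n / 2 ^ lam n := by
    have h := Nat.not_dvd_ordCompl Nat.prime_two hn
    rwa [Nat.factorization_def n Nat.prime_two] at h
  rw [Nat.testBit_eq_decide_div_mod_eq]
  rw [Nat.two_dvd_ne_zero] at hodd
  simp [hodd]

private lemma le_lam_of_pow_dvd {s q : ℕ} (hq : q ≠ 0) (h : 2 ^ s ∣ q) : s ≤ lam q := by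
  by_contra hlt
  push_neg at hlt
  exact pow_succ_padicValNat_not_dvd hq (dvd_trans (pow_dvd_pow 2 hlt) h)

private lemma bit_lo {m q : ℕ} {t : ℕ} (ht : t < lam q) :
    (m + q).testBit t = m.testBit t := by
  have h2 : 2 ^ (t + 1) ∣ q := dvd_trans (pow_dvd_pow 2 ht) pow_padicValNat_dvd
  obtain ⟨k, hk⟩ := h2
  have hq' : q = 2 ^ t * (2 * k) := by rw [hk]; ring
  rw [Nat.testBit_eq_decide_div_mod_eq, Nat.testBit_eq_decide_div_mod_eq, hq',
    Nat.add_mul_div_left _ _ (Nat.pow_pos (n := t) (by norm_num : 0 < 2)),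
    Nat.add_mul_mod_self_left]

private lemma m_lt {m q : ℕ} (h : mu m < lam q) : m < 2 ^ lam q :=
  lt_of_lt_of_le (Nat.lt_pow_succ_log_self one_lt_two m)
    (Nat.pow_le_pow_right (by norm_num) h)

private lemma bit_hi {m q : ℕ} (hmq : m < 2 ^ lam q) {t : ℕ} (ht : lam q ≤ t) :
    (m + q).testBit t = q.testBit t := by
  have hdvd : 2 ^ lam q ∣ q := pow_padicValNat_dvd
  have hdiv : (m + q) / 2 ^ lam q = q / 2 ^ lam q := by
    rw [Nat.add_div_of_dvd_left hdvd, Nat.div_eq_of_lt hmq, zero_add]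
  obtain ⟨j, rfl⟩ := Nat.exists_eq_add_of_le ht
  rw [Nat.testBit_eq_decide_div_mod_eq, Nat.testBit_eq_decide_div_mod_eq, pow_add,
    ← Nat.div_div_eq_div_mul, ← Nat.div_div_eq_div_mul, hdiv]

private lemma mu_add {m q : ℕ} (hq : 0 < q) (h : mu m < lam q) : mu (m + q) = mu q := by
  have hdvd : 2 ^ lam q ∣ q := pow_padicValNat_dvd
  have hL : lam q ≤ mu q := testBit_le_mu (testBit_lam hq.ne')
  apply Nat.log_eq_of_pow_le_of_lt_pow
  · exact le_trans (Nat.pow_log_le_self 2 hq.ne') (Nat.le_add_left q m)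
  · have h1 : q < 2 ^ (mu q + 1) := Nat.lt_pow_succ_log_self one_lt_two q
    have hdvd2 : 2 ^ lam q ∣ 2 ^ (mu q + 1) := pow_dvd_pow 2 (le_trans hL (Nat.le_succ _))
    obtain ⟨k, hk⟩ := hdvd
    obtain ⟨k2, hk2⟩ := hdvd2
    have hkk : k < k2 := by
      have hlt : 2 ^ lam q * k < 2 ^ lam q * k2 := by
        rw [← hk, ← hk2]; exact h1
      exact lt_of_mul_lt_mul_left hlt (Nat.zero_le _)
    have h2 : q + 2 ^ lam q ≤ 2 ^ (mu q + 1) := by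
      have e1 : q + 2 ^ lam q = 2 ^ lam q * (k + 1) := by
        rw [mul_add, mul_one, ← hk]
      rw [e1, hk2]
      exact Nat.mul_le_mul_left _ hkk
    have := m_lt h
    omega

private lemma mem_gaps_add {m q : ℕ} (hm : 0 < m) (hq : 0 < q) (h : mu m < lam q)
    (p : ℕ × ℕ) : p ∈ gaps (m + q) ↔ p ∈ gaps m ∨ p = (mu m, lam q) ∨ p ∈ gaps q := by
  obtain ⟨u, v⟩ := p
  constructor
  · rintro ⟨h1, h2, h12, hbet⟩
    simp only at h1 h2 h12 hbet
    by_cases hu : u < lam q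
    · have h1m : m.testBit u := by rwa [bit_lo hu] at h1
      have hum : u ≤ mu m := testBit_le_mu h1m
      by_cases hv : v < lam q
      · left
        refine ⟨h1m, by rwa [bit_lo hv] at h2, h12, fun t htu htv => ?_⟩
        have hb := hbet t htu htv
        rwa [bit_lo (htv.trans hv)] at hb
      · push_neg at hv
        right; left
        have hbm : (m + q).testBit (mu m) := by
          rw [bit_lo h]; exact testBit_mu hm.ne'
        have humu : u = mu m := by
          rcases lt_or_eq_of_le hum with hlt | he
          · exact absurd hbm (hbet _ hlt (lt_of_lt_of_le h hv))
          · exact he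
        have hbL : (m + q).testBit (lam q) := by
          rw [bit_hi (m_lt h) le_rfl]; exact testBit_lam hq.ne'
        have hvlam : v = lam q := by
          rcases lt_or_eq_of_le hv with hlt | he
          · exact absurd hbL (hbet _ (by omega) hlt)
          · exact he.symm
        simp [humu, hvlam]
    · push_neg at hu
      right; right
      have h1q : q.testBit u := by rwa [bit_hi (m_lt h) hu] at h1
      refine ⟨h1q, by rwa [bit_hi (m_lt h) (le_trans hu h12.le)] at h2, h12,
        fun t htu htv => ?_⟩
      have hb := hbet t htu htv
      rwa [bit_hi (m_lt h) (le_trans hu htu.le)] at hb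
  · rintro (⟨h1, h2, h12, hbet⟩ | heq | ⟨h1, h2, h12, hbet⟩)
    · simp only at h1 h2 h12 hbet
      have hvm : v ≤ mu m := testBit_le_mu h2
      have hv : v < lam q := lt_of_le_of_lt hvm h
      have hu : u < lam q := lt_trans h12 hv
      refine ⟨by rw [bit_lo hu]; exact h1, by rw [bit_lo hv]; exact h2, h12,
        fun t htu htv => ?_⟩
      rw [bit_lo (htv.trans hv)]
      exact hbet t htu htv
    · have hu : u = mu m := congrArg Prod.fst heq
      have hv : v = lam q := congrArg Prod.snd heq
      subst hu; subst hv
      refine ⟨by rw [bit_lo h]; exact testBit_mu hm.ne',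
        by rw [bit_hi (m_lt h) le_rfl]; exact testBit_lam hq.ne', h,
        fun t htu htv => ?_⟩
      rw [bit_lo htv]
      intro hbt
      exact absurd (testBit_le_mu hbt) (not_le.mpr htu)
    · simp only at h1 h2 h12 hbet
      have hu : lam q ≤ u := lam_le_of_testBit h1
      refine ⟨by rw [bit_hi (m_lt h) hu]; exact h1,
        by rw [bit_hi (m_lt h) (hu.trans h12.le)]; exact h2, h12,
        fun t htu htv => ?_⟩
      rw [bit_hi (m_lt h) (hu.trans htu.le)]
      exact hbet t htu htv

private lemma gaps_finite (n : ℕ) : (gaps n).Finite := by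
  apply Set.Finite.subset ((Set.finite_Iic (mu n)).prod (Set.finite_Iic (mu n)))
  rintro ⟨u, v⟩ ⟨h1, h2, -, -⟩
  exact ⟨testBit_le_mu h1, testBit_le_mu h2⟩

private lemma vsg_add (K : Set ℕ) (Kapp : ℕ → Set ℕ) (hmono : Monotone Kapp)
    (hK : K = ⋃ s, Kapp s) {m q : ℕ} (hm : 0 < m) (hq : 0 < q) (h : mu m < lam q)
    (hstage : ∀ x ≤ mu m, x ∈ K → x ∈ Kapp (lam q)) :
    VSG Kapp (m + q) = SG K Kapp m + VSG Kapp q := by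
  have hsub : ∀ s, Kapp s ⊆ K := fun s x hx => hK ▸ Set.mem_iUnion.mpr ⟨s, hx⟩
  have hmu : mu (m + q) = mu q := mu_add hq h
  have hLmu : lam q ≤ mu q := testBit_le_mu (testBit_lam hq.ne')
  have hset : {p : ℕ × ℕ | VeryShortGap Kapp (m + q) p}
      = {p : ℕ × ℕ | ShortGap K Kapp m p} ∪ {p : ℕ × ℕ | VeryShortGap Kapp q p} := by
    ext p
    constructor
    · rintro ⟨hpg, x, hx1, hx2, hx3⟩
      rcases (mem_gaps_add hm hq h p).mp hpg with hgm | heq | hgq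
      · exact Or.inl ⟨hgm, x, hx1, hsub _ hx2, hx3⟩
      · exfalso
        have hp1 : p.1 = mu m := congrArg Prod.fst heq
        have hp2 : p.2 = lam q := congrArg Prod.snd heq
        exact hx3 (hp2 ▸ hstage x (hp1 ▸ hx1) (hsub _ hx2))
      · exact Or.inr ⟨hgq, x, hx1, by rwa [hmu] at hx2, hx3⟩
    · rintro (⟨⟨hb1, hb2, hlt, hbet⟩, x, hx1, hx2, hx3⟩ | ⟨hpg, x, hx1, hx2, hx3⟩)
      · have hp2 : p.2 ≤ mu m := testBit_le_mu hb2
        refine ⟨(mem_gaps_add hm hq h p).mpr (Or.inl ⟨hb1, hb2, hlt, hbet⟩),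
          x, hx1, ?_, hx3⟩
        rw [hmu]
        exact hmono hLmu (hstage x (by omega) hx2)
      · exact ⟨(mem_gaps_add hm hq h p).mpr (Or.inr (Or.inr hpg)), x, hx1,
          by rwa [hmu], hx3⟩
  have hdisj : Disjoint {p : ℕ × ℕ | ShortGap K Kapp m p}
      {p : ℕ × ℕ | VeryShortGap Kapp q p} := by
    rw [Set.disjoint_left]
    rintro p ⟨⟨hb1, hb2, hlt, -⟩, -⟩ ⟨⟨hb1', hb2', hlt', -⟩, -⟩
    have h1 := testBit_le_mu hb2
    have h2 := lam_le_of_testBit hb1'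
    omega
  have hfin1 : {p : ℕ × ℕ | ShortGap K Kapp m p}.Finite :=
    Set.Finite.subset (gaps_finite m) (fun p hp => hp.1)
  have hfin2 : {p : ℕ × ℕ | VeryShortGap Kapp q p}.Finite :=
    Set.Finite.subset (gaps_finite q) (fun p hp => hp.1)
  unfold VSG SG
  rw [hset, Set.ncard_union_eq hdisj hfin1 hfin2]

private lemma exists_stage (K : Set ℕ) (Kapp : ℕ → Set ℕ) (hmono : Monotone Kapp)
    (hK : K = ⋃ s, Kapp s) (M : ℕ) : ∃ s, ∀ x ≤ M, x ∈ K → x ∈ Kapp s := by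
  have hex : ∀ x : ℕ, ∃ s, x ∈ K → x ∈ Kapp s := by
    intro x
    by_cases hx : x ∈ K
    · rw [hK] at hx
      obtain ⟨s, hs⟩ := Set.mem_iUnion.mp hx
      exact ⟨s, fun _ => hs⟩
    · exact ⟨0, fun hxx => absurd hxx hx⟩
  choose f hf using hex
  refine ⟨(Finset.range (M + 1)).sup f, fun x hx hxK => ?_⟩
  exact hmono (Finset.le_sup (Finset.mem_range.mpr (by omega))) (hf x hxK)

private lemma exists_block (H : Set ℕ) (hinf : H.Infinite) (hap : ApartSet H)
    (F : Finset ℕ) (j s : ℕ) (hj : 0 < j) :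
    ∃ G : Finset ℕ, ↑G ⊆ H ∧ G.card = j ∧ Disjoint F G ∧
      0 < ∑ x ∈ G, x ∧ s ≤ lam (∑ x ∈ G, x) := by
  obtain ⟨x0, hx0H, hx0⟩ := hinf.exists_notMem_finite (Set.finite_Iic (2 ^ s))
  have hx0big : 2 ^ s < x0 := not_le.mp (fun hle => hx0 (Set.mem_Iic.mpr hle))
  have hx0ne : x0 ≠ 0 := (lt_of_le_of_lt (Nat.zero_le _) hx0big).ne'
  have hsmu : s ≤ mu x0 := (Nat.le_log_iff_pow_le one_lt_two hx0ne).mpr hx0big.le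
  set T := max x0 (F.sup id) with hT
  obtain ⟨G, hGH', hGcard⟩ := (hinf.diff (Set.finite_Iic T)).exists_subset_card_eq j
  have hGH : ↑G ⊆ H := fun g hg => (hGH' hg).1
  have hGbig : ∀ g ∈ G, T < g :=
    fun g hg => not_le.mp (fun hle => (hGH' hg).2 (Set.mem_Iic.mpr hle))
  have hGne : G.Nonempty := Finset.card_pos.mp (by omega)
  have hdvd : ∀ g ∈ G, 2 ^ s ∣ g := by
    intro g hg
    have hgx0 : x0 < g := lt_of_le_of_lt (le_max_left _ _) (hGbig g hg)
    have hlam : mu x0 < lam g := hap.2 x0 hx0H g (hGH hg) hgx0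
    exact dvd_trans (pow_dvd_pow 2 (le_trans hsmu hlam.le)) pow_padicValNat_dvd
  have hsumdvd : 2 ^ s ∣ ∑ x ∈ G, x := Finset.dvd_sum hdvd
  have hpos : 0 < ∑ x ∈ G, x := by
    obtain ⟨g, hg⟩ := hGne
    calc 0 < g := hap.1 g (hGH hg)
    _ ≤ ∑ x ∈ G, x := Finset.single_le_sum (fun i _ => Nat.zero_le i) hg
  refine ⟨G, hGH, hGcard, ?_, hpos, le_lam_of_pow_dvd hpos.ne' hsumdvd⟩
  rw [Finset.disjoint_left]
  intro a haF haG
  have h1 := hGbig a haG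
  have h2 : a ≤ T := le_trans (Finset.le_sup (f := id) haF) (le_max_right _ _)
  omega

open Fin.NatCast

private lemma main_aux (K : Set ℕ) (Kapp : ℕ → Set ℕ)
    (hmono : Monotone Kapp) (hK : K = ⋃ s, Kapp s)
    (c : ℕ → Fin 2) (hc : ∀ n, c n = (VSG Kapp n : Fin 2))
    (H : Set ℕ) (hinf : H.Infinite) (hap : ApartSet H)
    (A : Set ℕ) (hmc : MonoChr c (FSin A H))
    (i j : ℕ) (hi : 0 < i) (hj : 0 < j) (hjA : j ∈ A) (hijA : i + j ∈ A)
    (m : ℕ) (hm : m ∈ FSeq i H) : Even (SG K Kapp m) := by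
  obtain ⟨F, hFH, hFcard, hFsum⟩ := hm
  have hmpos : 0 < m := by
    rw [← hFsum]
    have hFne : F.Nonempty := Finset.card_pos.mp (by omega)
    obtain ⟨x, hx⟩ := hFne
    exact lt_of_lt_of_le (hap.1 x (hFH hx))
      (Finset.single_le_sum (fun y _ => Nat.zero_le y) hx)
  obtain ⟨s0, hs0⟩ := exists_stage K Kapp hmono hK (mu m)
  obtain ⟨G, hGH, hGcard, hdisj, hqpos, hqlam⟩ :=
    exists_block H hinf hap F j (max s0 (mu m + 1)) hj
  set q := ∑ x ∈ G, x with hqdef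
  have hmuq : mu m < lam q :=
    lt_of_lt_of_le (by omega : mu m < max s0 (mu m + 1)) hqlam
  have hstage : ∀ x ≤ mu m, x ∈ K → x ∈ Kapp (lam q) :=
    fun x hx hxK => hmono (le_trans (le_max_left _ _) hqlam) (hs0 x hx hxK)
  have hkey := vsg_add K Kapp hmono hK hmpos hqpos hmuq hstage
  have hqmem : q ∈ FSin A H := Set.mem_biUnion hjA ⟨G, hGH, hGcard, rfl⟩
  have hmqmem : m + q ∈ FSin A H := by
    refine Set.mem_biUnion hijA ⟨F ∪ G, ?_, ?_, ?_⟩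
    · rw [Finset.coe_union]
      exact Set.union_subset hFH hGH
    · rw [Finset.card_union_of_disjoint hdisj, hFcard, hGcard]
    · rw [Finset.sum_union hdisj, hFsum]
  have hcolor := hmc q hqmem (m + q) hmqmem
  rw [hc, hc, hkey, Nat.cast_add] at hcolor
  have hzero : ((SG K Kapp m : ℕ) : Fin 2) = 0 := add_eq_right.mp hcolor.symm
  have hval := congrArg Fin.val hzero
  rw [Fin.val_natCast] at hval
  exact Nat.even_iff.mpr hval

theorem sg_even_on_solution (K : Set ℕ) (Kapp : ℕ → Set ℕ)
    (hmono : ∀ s, Kapp s ⊆ Kapp (s + 1)) (hK : K = ⋃ s, Kapp s)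
    (c : ℕ → Fin 2) (hc : ∀ n, c n = (VSG Kapp n : Fin 2))
    (H : Set ℕ) (hinf : H.Infinite) (hap : ApartSet H)
    (a b : ℕ) (ha : 0 < a) (hb : 0 < b)
    (hmc : MonoChr c (FSin {a, b, a + b, a + 2 * b} H)) :
    ∀ m ∈ FSeq a H ∪ FSeq b H ∪ FSeq (a + b) H, Even (SG K Kapp m) := by
  have hmono' : Monotone Kapp := monotone_nat_of_le_succ hmono
  intro m hm
  rcases hm with (hm | hm) | hm
  · exact main_aux K Kapp hmono' hK c hc H hinf hap _ hmc a b ha hb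
      (by simp) (by simp) m hm
  · exact main_aux K Kapp hmono' hK c hc H hinf hap _ hmc b a hb ha
      (by simp) (by simp only [Set.mem_insert_iff, Set.mem_singleton_iff]; omega) m hm
  · exact main_aux K Kapp hmono' hK c hc H hinf hap _ hmc (a + b) b (by omega) hb
      (by simp) (by simp only [Set.mem_insert_iff, Set.mem_singleton_iff]; omega) m hm
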